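/- For every j ∈ N, conv(B_j) = conv(B_j^≤) ∩ conv(B_j^≥). -/

import Mathlib

def YP (n : ℕ) (u0 : ℝ) (u : Fin n → ℝ) (y0 : ℝ) (y : Fin n → ℝ) : Prop :=
  u0 * y0 + ∑ t, u t * y t = 1 ∧ ∀ t, 0 ≤ y t ∧ y t ≤ y0

lemma sum_comb {n : ℕ} (u p q : Fin n → ℝ) (θ σ : ℝ) :
    ∑ t, u t * (θ * p t + σ * q t) = θ * ∑ t, u t * p t + σ * ∑ t, u t * q t := by
  rw [Finset.mul_sum, Finset.mul_sum, ← Finset.sum_add_distrib]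
  exact Finset.sum_congr rfl fun t _ => by ring


lemma YP.comb {n : ℕ} {u0 : ℝ} {u : Fin n → ℝ} (θ σ : ℝ) (hθ : 0 ≤ θ) (hσ : 0 ≤ σ)
    (hθσ : θ + σ = 1) {p0 q0 : ℝ} {p q : Fin n → ℝ}
    (hp : YP n u0 u p0 p) (hq : YP n u0 u q0 q) :
    YP n u0 u (θ * p0 + σ * q0) (fun t => θ * p t + σ * q t) := by
  constructor
  · rw [sum_comb]
    linear_combination θ * hp.1 + σ * hq.1 + hθσ
  · intro t
    obtain ⟨h1, h2⟩ := hp.2 t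
    obtain ⟨h3, h4⟩ := hq.2 t
    dsimp only
    constructor
    · positivity
    · nlinarith [mul_le_mul_of_nonneg_left h2 hθ, mul_le_mul_of_nonneg_left h4 hσ]

set_option maxHeartbeats 600000 in
lemma key {n : ℕ} {u0 : ℝ} (hu0 : 0 < u0) {u : Fin n → ℝ} (hu : ∀ t, 0 ≤ u t) (j : Fin n)
    {x : ℝ} (hx0 : 0 < x) (hx1 : x < 1)
    {a0 b0 a0' b0' c0 : ℝ} {a b a' b' c : Fin n → ℝ}
    (ha : YP n u0 u a0 a) (haj : a j = 0) (hb : YP n u0 u b0 b)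
    (ha' : YP n u0 u a0' a') (hb' : YP n u0 u b0' b') (hb'j : b' j = b0')
    (hc0 : c0 = (1-x)*a0 + x*b0) (hc : ∀ t, c t = (1-x)*a t + x*b t)
    (hc0' : c0 = (1-x)*a0' + x*b0') (hc' : ∀ t, c t = (1-x)*a' t + x*b' t) :
    ∃ α0 α β0 β, YP n u0 u α0 α ∧ α j = 0 ∧ YP n u0 u β0 β ∧ β j = β0 ∧
      c0 = (1-x)*α0 + x*β0 ∧ ∀ t, c t = (1-x)*α t + x*β t := by
  have h1x : 0 < 1 - x := by linarith
  have h1x' : (1:ℝ) - x ≠ 0 := ne_of_gt h1x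
  have hx' : x ≠ 0 := ne_of_gt hx0
  -- facts about c
  have hsum_c : ∑ t, u t * c t = (1-x) * ∑ t, u t * a t + x * ∑ t, u t * b t := by
    rw [← sum_comb]; exact Finset.sum_congr rfl fun t _ => by rw [hc t]
  have hcH : u0 * c0 + ∑ t, u t * c t = 1 := by
    rw [hc0, hsum_c]; linear_combination (1-x) * ha.1 + x * hb.1
  have hcb : ∀ t, 0 ≤ c t ∧ c t ≤ c0 := by
    intro t
    obtain ⟨h1, h2⟩ := ha.2 t; obtain ⟨h3, h4⟩ := hb.2 t
    rw [hc t, hc0]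
    constructor
    · positivity
    · nlinarith
  have hcjx : c j = x * b j := by rw [hc j, haj]; ring
  have hcj' : c j = (1-x) * a' j + x * b0' := by rw [hc' j, hb'j]
  -- interval bounds
  set L : Fin n → ℝ := fun t => max 0 (c t - c j) with hL
  set C : Fin n → ℝ := fun t => if t = j then 0 else min (c0 - c j) (c t) with hCdef
  have hLj : L j = 0 := by simp [hL]
  have hCj : C j = 0 := by simp [hCdef]
  have hL0 : ∀ t, 0 ≤ L t := fun t => le_max_left _ _
  have hLC : ∀ t, L t ≤ C t := by
    intro t
    by_cases ht : t = j
    · subst ht; rw [hLj, hCj]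
    · simp only [hCdef, if_neg ht]
      exact max_le (le_min (by linarith [(hcb j).2]) (hcb t).1)
        (le_min (by linarith [(hcb t).2]) (by linarith [(hcb j).1]))
  have hCc0 : ∀ t, C t ≤ c0 - c j := by
    intro t
    by_cases ht : t = j
    · rw [ht, hCj]; linarith [(hcb j).2]
    · simp only [hCdef, if_neg ht]; exact min_le_left _ _
  have hCc : ∀ t, C t ≤ c t := by
    intro t
    by_cases ht : t = j
    · rw [ht, hCj]; exact (hcb j).1
    · simp only [hCdef, if_neg ht]; exact min_le_right _ _
  set SL := ∑ t, u t * L t with hSLdef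
  set SU := ∑ t, u t * C t with hSUdef
  set T := (1 - x) - u0 * (c0 - c j) with hTdef
  have hSLSU : SL ≤ SU :=
    Finset.sum_le_sum fun t _ => mul_le_mul_of_nonneg_left (hLC t) (hu t)
  -- SL ≤ T, using the (a', b') representation
  have hgap' : c0 - c j = (1-x) * (a0' - a' j) := by rw [hc0', hcj']; ring
  have hSLT : SL ≤ T := by
    have hstep : ∀ t, u t * L t ≤ u t * ((1-x) * a' t) := by
      intro t
      refine mul_le_mul_of_nonneg_left ?_ (hu t)
      refine max_le (mul_nonneg (by linarith) (ha'.2 t).1) ?_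
      have h1 := (hb'.2 t).2
      have h2 := (ha'.2 j).1
      rw [hc' t, hcj']
      nlinarith
    have h2 : SL ≤ ∑ t, u t * ((1-x) * a' t) := Finset.sum_le_sum fun t _ => hstep t
    have h3 : ∑ t, u t * ((1-x) * a' t) = (1-x) * ∑ t, u t * a' t := by
      rw [Finset.mul_sum]; exact Finset.sum_congr rfl fun t _ => by ring
    have h4 := ha'.1
    have h5 := (ha'.2 j).1
    rw [h3] at h2
    rw [hTdef, hgap']
    have h6 : (1-x) * (u0 * a0') + (1-x) * ∑ t, u t * a' t = 1 - x := by
      linear_combination (1-x) * h4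
    have h7 : 0 ≤ u0 * ((1-x) * a' j) :=
      mul_nonneg hu0.le (mul_nonneg (by linarith) h5)
    linarith [h2, h6, h7]
  -- T ≤ SU, using the (a, b) representation
  have hgap : c0 - c j = (1-x) * a0 + x * (b0 - b j) := by rw [hc0, hcjx]; ring
  have hTSU : T ≤ SU := by
    set g : Fin n → ℝ := fun t => if t = j then 0 else min (b0 - b j) (b t) with hgdef
    have hg0 : ∀ t, 0 ≤ g t := by
      intro t
      by_cases ht : t = j
      · simp [hgdef, ht]
      · simp only [hgdef, if_neg ht]
        exact le_min (by linarith [(hb.2 j).2]) (hb.2 t).1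
    have hstep : ∀ t, u t * ((1-x) * a t + x * g t) ≤ u t * C t := by
      intro t
      refine mul_le_mul_of_nonneg_left ?_ (hu t)
      by_cases ht : t = j
      · rw [ht, hCj]; simp [hgdef, haj]
      · simp only [hCdef, hgdef, if_neg ht]
        have h1 := (ha.2 t).2
        have h2 := min_le_left (b0 - b j) (b t)
        have h3 := min_le_right (b0 - b j) (b t)
        refine le_min ?_ ?_
        · rw [hgap]; nlinarith
        · rw [hc t]; nlinarith
    have h2 : ∑ t, u t * ((1-x) * a t + x * g t) ≤ SU := Finset.sum_le_sum fun t _ => hstep t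
    have h3 : ∑ t, u t * ((1-x) * a t + x * g t)
        = (1-x) * ∑ t, u t * a t + x * ∑ t, u t * g t := sum_comb u a g (1-x) x
    have h4 : 0 ≤ ∑ t, u t * g t := Finset.sum_nonneg fun t _ => mul_nonneg (hu t) (hg0 t)
    have h5 := ha.1
    have hb0j := (hb.2 j).2
    rw [h3] at h2
    rw [hTdef, hgap]
    have h6 : (1-x) * (u0 * a0) + (1-x) * ∑ t, u t * a t = 1 - x := by
      linear_combination (1-x) * h5
    have h7 : 0 ≤ u0 * (x * (b0 - b j)) :=
      mul_nonneg hu0.le (mul_nonneg hx0.le (by linarith))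
    have h8 : 0 ≤ x * ∑ t, u t * g t := mul_nonneg hx0.le h4
    linarith [h2, h6, h7, h8]
  -- the interpolation parameter
  set lam := if SU - SL = 0 then 0 else (T - SL) / (SU - SL) with hlamdef
  have hlam0 : 0 ≤ lam := by
    rw [hlamdef]
    split_ifs with h
    · exact le_refl 0
    · exact div_nonneg (by linarith) (by linarith)
  have hlam1 : lam ≤ 1 := by
    rw [hlamdef]
    split_ifs with h
    · exact zero_le_one
    · have hpos : 0 < SU - SL := lt_of_le_of_ne (by linarith) (Ne.symm h)
      rw [div_le_one hpos]; linarith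
  have hlamT : SL + lam * (SU - SL) = T := by
    rw [hlamdef]
    split_ifs with h
    · linarith
    · rw [div_mul_cancel₀ _ h]; ring
  set d : Fin n → ℝ := fun t => L t + lam * (C t - L t) with hddef
  have hdj : d j = 0 := by simp [hddef, hLj, hCj]
  have hdL : ∀ t, L t ≤ d t := by
    intro t; simp only [hddef]
    nlinarith [mul_nonneg hlam0 (sub_nonneg.mpr (hLC t))]
  have hdC : ∀ t, d t ≤ C t := by
    intro t; simp only [hddef]
    nlinarith [mul_nonneg (sub_nonneg.mpr hlam1) (sub_nonneg.mpr (hLC t))]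
  have hd0 : ∀ t, 0 ≤ d t := fun t => le_trans (hL0 t) (hdL t)
  have hsumd : ∑ t, u t * d t = T := by
    have h1 : ∑ t, u t * d t = ∑ t, ((1 - lam) * (u t * L t) + lam * (u t * C t)) :=
      Finset.sum_congr rfl fun t _ => by simp only [hddef]; ring
    rw [h1, Finset.sum_add_distrib, ← Finset.mul_sum, ← Finset.mul_sum, ← hSLdef, ← hSUdef]
    linarith [hlamT]
  -- the decomposition
  refine ⟨(c0 - c j) / (1-x), fun t => d t / (1-x), c j / x, fun t => (c t - d t) / x,
    ⟨?_, ?_⟩, ?_, ⟨?_, ?_⟩, ?_, ?_, ?_⟩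
  · -- hyperplane for α
    have h1 : ∑ t, u t * (d t / (1-x)) = (∑ t, u t * d t) / (1-x) := by
      rw [Finset.sum_div]; exact Finset.sum_congr rfl fun t _ => by ring
    rw [h1, hsumd, hTdef]; field_simp
    ring
  · -- bounds for α
    intro t
    dsimp only
    constructor
    · exact div_nonneg (hd0 t) h1x.le
    · exact (div_le_div_iff_of_pos_right h1x).mpr (le_trans (hdC t) (hCc0 t))
  · -- α j = 0
    simp [hdj]
  · -- hyperplane for β
    have h1 : ∑ t, u t * ((c t - d t) / x) = ((∑ t, u t * c t) - ∑ t, u t * d t) / x := by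
      have e : ∑ t, u t * ((c t - d t) / x) = ∑ t, (u t * c t - u t * d t) / x :=
        Finset.sum_congr rfl fun t _ => by ring
      rw [e, ← Finset.sum_div, Finset.sum_sub_distrib]
    have h2 : ∑ t, u t * c t = 1 - u0 * c0 := by linarith [hcH]
    rw [h1, hsumd, h2, hTdef]; field_simp
    try ring
  · -- bounds for β
    intro t
    dsimp only
    constructor
    · exact div_nonneg (sub_nonneg.mpr (le_trans (hdC t) (hCc t))) hx0.le
    · have h1 : c t - d t ≤ c j := by
        have h2 : c t - c j ≤ L t := le_max_right _ _
        linarith [hdL t]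
      exact (div_le_div_iff_of_pos_right hx0).mpr h1
  · -- β j = β0
    dsimp only
    rw [hdj, sub_zero]
  · field_simp
    ring
  · intro t; dsimp only; field_simp
    try ring

theorem stmt12 (n : ℕ) (hn : 1 ≤ n) (u0 : ℝ) (hu0 : 0 < u0)
    (u : Fin n → ℝ) (hu : ∀ t, 0 ≤ u t) (j : Fin n) :
    convexHull ℝ {p : ℝ × ℝ × (Fin n → ℝ) |
        (p.1 = 0 ∨ p.1 = 1) ∧
        (u0 * p.2.1 + ∑ t, u t * p.2.2 t = 1 ∧ ∀ t, 0 ≤ p.2.2 t ∧ p.2.2 t ≤ p.2.1) ∧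
        p.2.2 j = p.2.1 * p.1} =
      convexHull ℝ {p : ℝ × ℝ × (Fin n → ℝ) |
        (p.1 = 0 ∨ p.1 = 1) ∧
        (u0 * p.2.1 + ∑ t, u t * p.2.2 t = 1 ∧ ∀ t, 0 ≤ p.2.2 t ∧ p.2.2 t ≤ p.2.1) ∧
        p.2.2 j ≤ p.2.1 * p.1} ∩
      convexHull ℝ {p : ℝ × ℝ × (Fin n → ℝ) |
        (p.1 = 0 ∨ p.1 = 1) ∧
        (u0 * p.2.1 + ∑ t, u t * p.2.2 t = 1 ∧ ∀ t, 0 ≤ p.2.2 t ∧ p.2.2 t ≤ p.2.1) ∧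
        p.2.1 * p.1 ≤ p.2.2 j} := by
  classical
  set S0 : Set (ℝ × ℝ × (Fin n → ℝ)) :=
    {p | p.1 = 0 ∧ YP n u0 u p.2.1 p.2.2 ∧ p.2.2 j = 0} with hS0def
  set S1 : Set (ℝ × ℝ × (Fin n → ℝ)) :=
    {p | p.1 = 1 ∧ YP n u0 u p.2.1 p.2.2 ∧ p.2.2 j = p.2.1} with hS1def
  set T0 : Set (ℝ × ℝ × (Fin n → ℝ)) :=
    {p | p.1 = 0 ∧ YP n u0 u p.2.1 p.2.2} with hT0def
  set T1 : Set (ℝ × ℝ × (Fin n → ℝ)) :=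
    {p | p.1 = 1 ∧ YP n u0 u p.2.1 p.2.2} with hT1def
  -- set identities
  have hB : {p : ℝ × ℝ × (Fin n → ℝ) |
      (p.1 = 0 ∨ p.1 = 1) ∧
      (u0 * p.2.1 + ∑ t, u t * p.2.2 t = 1 ∧ ∀ t, 0 ≤ p.2.2 t ∧ p.2.2 t ≤ p.2.1) ∧
      p.2.2 j = p.2.1 * p.1} = S0 ∪ S1 := by
    ext p
    simp only [hS0def, hS1def, Set.mem_setOf_eq, Set.mem_union, YP]
    constructor
    · rintro ⟨h01 | h01, hY, hj⟩
      · exact Or.inl ⟨h01, hY, by rw [hj, h01, mul_zero]⟩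
      · exact Or.inr ⟨h01, hY, by rw [hj, h01, mul_one]⟩
    · rintro (⟨h01, hY, hj⟩ | ⟨h01, hY, hj⟩)
      · exact ⟨Or.inl h01, hY, by rw [h01, mul_zero, hj]⟩
      · exact ⟨Or.inr h01, hY, by rw [h01, mul_one, hj]⟩
  have hBle : {p : ℝ × ℝ × (Fin n → ℝ) |
      (p.1 = 0 ∨ p.1 = 1) ∧
      (u0 * p.2.1 + ∑ t, u t * p.2.2 t = 1 ∧ ∀ t, 0 ≤ p.2.2 t ∧ p.2.2 t ≤ p.2.1) ∧
      p.2.2 j ≤ p.2.1 * p.1} = S0 ∪ T1 := by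
    ext p
    simp only [hS0def, hT1def, Set.mem_setOf_eq, Set.mem_union, YP]
    constructor
    · rintro ⟨h01 | h01, hY, hj⟩
      · refine Or.inl ⟨h01, hY, ?_⟩
        rw [h01, mul_zero] at hj
        exact le_antisymm hj (hY.2 j).1
      · exact Or.inr ⟨h01, hY⟩
    · rintro (⟨h01, hY, hj⟩ | ⟨h01, hY⟩)
      · exact ⟨Or.inl h01, hY, by rw [h01, mul_zero, hj]⟩
      · exact ⟨Or.inr h01, hY, by rw [h01, mul_one]; exact (hY.2 j).2⟩
  have hBge : {p : ℝ × ℝ × (Fin n → ℝ) |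
      (p.1 = 0 ∨ p.1 = 1) ∧
      (u0 * p.2.1 + ∑ t, u t * p.2.2 t = 1 ∧ ∀ t, 0 ≤ p.2.2 t ∧ p.2.2 t ≤ p.2.1) ∧
      p.2.1 * p.1 ≤ p.2.2 j} = T0 ∪ S1 := by
    ext p
    simp only [hT0def, hS1def, Set.mem_setOf_eq, Set.mem_union, YP]
    constructor
    · rintro ⟨h01 | h01, hY, hj⟩
      · exact Or.inl ⟨h01, hY⟩
      · refine Or.inr ⟨h01, hY, ?_⟩
        rw [h01, mul_one] at hj
        exact le_antisymm (hY.2 j).2 hj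
    · rintro (⟨h01, hY⟩ | ⟨h01, hY, hj⟩)
      · exact ⟨Or.inl h01, hY, by rw [h01, mul_zero]; exact (hY.2 j).1⟩
      · exact ⟨Or.inr h01, hY, by rw [h01, mul_one, hj]⟩
  -- convexity of the pieces
  have hcomb : ∀ (θ σ : ℝ), 0 ≤ θ → 0 ≤ σ → θ + σ = 1 →
      ∀ p q : ℝ × ℝ × (Fin n → ℝ), YP n u0 u p.2.1 p.2.2 → YP n u0 u q.2.1 q.2.2 →
      YP n u0 u ((θ • p + σ • q).2.1) ((θ • p + σ • q).2.2) := by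
    intro θ σ hθ hσ hθσ p q hp hq
    exact YP.comb θ σ hθ hσ hθσ hp hq
  have hconvS0 : Convex ℝ S0 := by
    rintro p ⟨hp1, hpY, hpj⟩ q ⟨hq1, hqY, hqj⟩ θ σ hθ hσ hθσ
    refine ⟨?_, hcomb θ σ hθ hσ hθσ p q hpY hqY, ?_⟩
    · show θ * p.1 + σ * q.1 = 0; rw [hp1, hq1]; ring
    · show θ * p.2.2 j + σ * q.2.2 j = 0
      rw [hpj, hqj]; ring
  have hconvS1 : Convex ℝ S1 := by
    rintro p ⟨hp1, hpY, hpj⟩ q ⟨hq1, hqY, hqj⟩ θ σ hθ hσ hθσ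
    refine ⟨?_, hcomb θ σ hθ hσ hθσ p q hpY hqY, ?_⟩
    · show θ * p.1 + σ * q.1 = 1; rw [hp1, hq1]; linarith
    · show θ * p.2.2 j + σ * q.2.2 j = θ * p.2.1 + σ * q.2.1
      rw [hpj, hqj]
  have hconvT0 : Convex ℝ T0 := by
    rintro p ⟨hp1, hpY⟩ q ⟨hq1, hqY⟩ θ σ hθ hσ hθσ
    refine ⟨?_, hcomb θ σ hθ hσ hθσ p q hpY hqY⟩
    show θ * p.1 + σ * q.1 = 0; rw [hp1, hq1]; ring
  have hconvT1 : Convex ℝ T1 := by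
    rintro p ⟨hp1, hpY⟩ q ⟨hq1, hqY⟩ θ σ hθ hσ hθσ
    refine ⟨?_, hcomb θ σ hθ hσ hθσ p q hpY hqY⟩
    show θ * p.1 + σ * q.1 = 1; rw [hp1, hq1]; linarith
  -- nonemptiness
  have hS0ne : S0.Nonempty := by
    refine ⟨(0, u0⁻¹, fun _ => 0), rfl, ⟨?_, ?_⟩, rfl⟩
    · simp [mul_inv_cancel₀ hu0.ne']
    · intro t
      exact ⟨le_refl 0, by positivity⟩
  have hS1ne : S1.Nonempty := by
    have hpos : 0 < u0 + ∑ t, u t := by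
      have hs : 0 ≤ ∑ t, u t := Finset.sum_nonneg fun t _ => hu t
      linarith
    refine ⟨(1, (u0 + ∑ t, u t)⁻¹, fun _ => (u0 + ∑ t, u t)⁻¹), rfl, ⟨?_, ?_⟩, rfl⟩
    · show u0 * (u0 + ∑ t, u t)⁻¹ + ∑ t, u t * (u0 + ∑ t, u t)⁻¹ = 1
      rw [← Finset.sum_mul]
      field_simp
    · intro t
      exact ⟨by positivity, le_refl _⟩
  have hS0T0 : S0 ⊆ T0 := fun p hp => ⟨hp.1, hp.2.1⟩
  have hS1T1 : S1 ⊆ T1 := fun p hp => ⟨hp.1, hp.2.1⟩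
  have hT0ne : T0.Nonempty := hS0ne.mono hS0T0
  have hT1ne : T1.Nonempty := hS1ne.mono hS1T1
  rw [hB, hBle, hBge, hconvS0.convexHull_union hconvS1 hS0ne hS1ne,
    hconvS0.convexHull_union hconvT1 hS0ne hT1ne,
    hconvT0.convexHull_union hconvS1 hT0ne hS1ne]
  apply Set.Subset.antisymm
  · exact Set.subset_inter (convexJoin_mono Set.Subset.rfl hS1T1)
      (convexJoin_mono hS0T0 Set.Subset.rfl)
  rintro p ⟨hp1, hp2⟩
  rw [mem_convexJoin] at hp1 hp2 ⊢
  obtain ⟨P0, hP0, P1, hP1, θ1, σ1, hθ1, hσ1, hθσ1, hcomb1⟩ := hp1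
  obtain ⟨Q0, hQ0, Q1, hQ1, θ2, σ2, hθ2, hσ2, hθσ2, hcomb2⟩ := hp2
  -- first coordinates
  have hfst1 : θ1 * P0.1 + σ1 * P1.1 = p.1 := congrArg Prod.fst hcomb1
  have hfst2 : θ2 * Q0.1 + σ2 * Q1.1 = p.1 := congrArg Prod.fst hcomb2
  rw [hP0.1, hP1.1] at hfst1
  rw [hQ0.1, hQ1.1] at hfst2
  have hσ1x : σ1 = p.1 := by linarith
  have hσ2x : σ2 = p.1 := by linarith
  have hx0 : 0 ≤ p.1 := hσ1x ▸ hσ1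
  have hx1 : p.1 ≤ 1 := by rw [← hσ1x]; linarith
  by_cases hxa : p.1 = 0
  · -- p = P0 ∈ S0
    have hθ1' : θ1 = 1 := by rw [hσ1x, hxa] at hθσ1; linarith
    have hσ1' : σ1 = 0 := by rw [hσ1x, hxa]
    rw [hθ1', hσ1', one_smul, zero_smul, add_zero] at hcomb1
    obtain ⟨w, hw⟩ := hS1ne
    exact ⟨P0, hP0, w, hw, hcomb1 ▸ left_mem_segment ℝ P0 w⟩
  by_cases hxb : p.1 = 1
  · -- p = Q1 ∈ S1
    have hσ2' : σ2 = 1 := by rw [hσ2x, hxb]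
    have hθ2' : θ2 = 0 := by rw [hσ2x, hxb] at hθσ2; linarith
    rw [hθ2', hσ2', one_smul, zero_smul, zero_add] at hcomb2
    obtain ⟨w, hw⟩ := hS0ne
    exact ⟨w, hw, Q1, hQ1, hcomb2 ▸ right_mem_segment ℝ w Q1⟩
  -- interior case
  have hx0' : 0 < p.1 := lt_of_le_of_ne hx0 (Ne.symm hxa)
  have hx1' : p.1 < 1 := lt_of_le_of_ne hx1 hxb
  have hθ1x : θ1 = 1 - p.1 := by rw [← hσ1x]; linarith
  have hθ2x : θ2 = 1 - p.1 := by rw [← hσ2x]; linarith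
  have hc0a : p.2.1 = (1 - p.1) * P0.2.1 + p.1 * P1.2.1 := by
    have h := congrArg (fun z => z.2.1) hcomb1
    rw [← h]
    show θ1 * P0.2.1 + σ1 * P1.2.1 = _
    rw [hθ1x, hσ1x]
  have hca : ∀ t, p.2.2 t = (1 - p.1) * P0.2.2 t + p.1 * P1.2.2 t := by
    intro t
    have h := congrArg (fun z => z.2.2 t) hcomb1
    rw [← h]
    show θ1 * P0.2.2 t + σ1 * P1.2.2 t = _
    rw [hθ1x, hσ1x]
  have hc0b : p.2.1 = (1 - p.1) * Q0.2.1 + p.1 * Q1.2.1 := by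
    have h := congrArg (fun z => z.2.1) hcomb2
    rw [← h]
    show θ2 * Q0.2.1 + σ2 * Q1.2.1 = _
    rw [hθ2x, hσ2x]
  have hcb : ∀ t, p.2.2 t = (1 - p.1) * Q0.2.2 t + p.1 * Q1.2.2 t := by
    intro t
    have h := congrArg (fun z => z.2.2 t) hcomb2
    rw [← h]
    show θ2 * Q0.2.2 t + σ2 * Q1.2.2 t = _
    rw [hθ2x, hσ2x]
  obtain ⟨α0, α, β0, β, hαY, hαj, hβY, hβj, hcomb0, hcombf⟩ :=
    key hu0 hu j hx0' hx1' hP0.2.1 hP0.2.2 hP1.2 hQ0.2 hQ1.2.1 hQ1.2.2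
      hc0a hca hc0b hcb
  refine ⟨(0, α0, α), ⟨rfl, hαY, hαj⟩, (1, β0, β), ⟨rfl, hβY, hβj⟩,
    1 - p.1, p.1, by linarith, hx0, by ring, ?_⟩
  have h1 : ((1 - p.1) • ((0:ℝ), α0, α) + p.1 • ((1:ℝ), β0, β)).1 = p.1 := by
    show (1 - p.1) * 0 + p.1 * 1 = p.1; ring
  have h2 : ((1 - p.1) • ((0:ℝ), α0, α) + p.1 • ((1:ℝ), β0, β)).2.1 = p.2.1 := by
    show (1 - p.1) * α0 + p.1 * β0 = p.2.1
    linarith [hcomb0]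
  have h3 : ((1 - p.1) • ((0:ℝ), α0, α) + p.1 • ((1:ℝ), β0, β)).2.2 = p.2.2 := by
    funext t
    show (1 - p.1) * α t + p.1 * β t = p.2.2 t
    linarith [hcombf t]
  exact Prod.ext h1 (Prod.ext h2 h3)
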